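/- Let k ≥ 3. The subgraph of Σ^{R·2}_{k,1} obtained by deleting the vertex b_2 (and its incident edges) has diameter exactly three. -/

import Mathlib

/-- The graph `Σ^{R·m}_{k,t}` on vertices `a_1,…,a_k` (`Sum.inl`), `b_1,…,b_{k+t}`
(`Sum.inr ∘ Sum.inl`, 0-indexed) and `c_1,…,c_m` (`Sum.inr ∘ Sum.inr`, 0-indexed). -/
def sigmaRm (k t m : ℕ) : SimpleGraph (Fin k ⊕ Fin (k + t) ⊕ Fin m) :=
  SimpleGraph.fromRel fun x y =>
    match x, y with
    | Sum.inl _, Sum.inl _ => True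
    | Sum.inr (Sum.inl _), Sum.inr (Sum.inl _) => True
    | Sum.inr (Sum.inr _), Sum.inr (Sum.inr _) => True
    | Sum.inl i, Sum.inr (Sum.inl j) => (j : ℕ) = (i : ℕ) ∨ ((i : ℕ) < t ∧ (j : ℕ) = k + (i : ℕ))
    | Sum.inr (Sum.inr _), Sum.inr (Sum.inl _) => True
    | _, _ => False

namespace Stmt8Aux

variable {k : ℕ}

def S (k : ℕ) (hk : 3 ≤ k) : Set (Fin k ⊕ Fin (k + 1) ⊕ Fin 2) :=
  {v | v ≠ Sum.inr (Sum.inl ⟨1, by linarith⟩)}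

def G (k : ℕ) (hk : 3 ≤ k) : SimpleGraph (S k hk) := (sigmaRm k 1 2).induce (S k hk)

variable (hk : 3 ≤ k)

def A (i : Fin k) : S k hk := ⟨Sum.inl i, by simp [S]⟩

def B (j : Fin (k+1)) (h : (j:ℕ) ≠ 1) : S k hk :=
  ⟨Sum.inr (Sum.inl j), by
    simp only [S, Set.mem_setOf_eq, ne_eq, Sum.inr.injEq, Sum.inl.injEq]
    intro hj; apply h; rw [hj]⟩

def C (c : Fin 2) : S k hk := ⟨Sum.inr (Sum.inr c), by simp [S]⟩

lemma adjAA {i i' : Fin k} (h : i ≠ i') : (G k hk).Adj (A hk i) (A hk i') := by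
  simp [G, A, sigmaRm, SimpleGraph.fromRel_adj, h]

lemma adjAB {i : Fin k} {j : Fin (k+1)} (hj : (j:ℕ) ≠ 1) (h : (j:ℕ) = i) :
    (G k hk).Adj (A hk i) (B hk j hj) := by
  simp [G, A, B, sigmaRm, SimpleGraph.fromRel_adj, h]

lemma adjBB {j j' : Fin (k+1)} (hj : (j:ℕ) ≠ 1) (hj' : (j':ℕ) ≠ 1) (h : j ≠ j') :
    (G k hk).Adj (B hk j hj) (B hk j' hj') := by
  simp [G, B, sigmaRm, SimpleGraph.fromRel_adj, h]

lemma adjBC {j : Fin (k+1)} (hj : (j:ℕ) ≠ 1) (c : Fin 2) :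
    (G k hk).Adj (B hk j hj) (C hk c) := by
  simp [G, B, C, sigmaRm, SimpleGraph.fromRel_adj]

lemma eq_or_adj_step {u v : S k hk} (h : u = v ∨ (G k hk).Adj u v) :
    (G k hk).edist u v ≤ 1 := by
  rcases h with h | h
  · subst h; simp [SimpleGraph.edist_self]
  · calc (G k hk).edist u v ≤ (h.toWalk).length := SimpleGraph.edist_le _
    _ ≤ 1 := by simp

lemma eqOrAdjAA (i i' : Fin k) : A hk i = A hk i' ∨ (G k hk).Adj (A hk i) (A hk i') := by
  rcases eq_or_ne i i' with h | h
  · exact Or.inl (by rw [h])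
  · exact Or.inr (adjAA hk h)

lemma eqOrAdjBB {j j' : Fin (k+1)} (hj : (j:ℕ) ≠ 1) (hj' : (j':ℕ) ≠ 1) :
    B hk j hj = B hk j' hj' ∨ (G k hk).Adj (B hk j hj) (B hk j' hj') := by
  rcases eq_or_ne j j' with h | h
  · exact Or.inl (by simp [B, h])
  · exact Or.inr (adjBB hk _ _ h)

def B0 : S k hk := B hk ⟨0, by omega⟩ (by simp)

lemma edist_to_B0 (u : S k hk) : (G k hk).edist u (B0 hk) ≤ 2 := by
  obtain ⟨v, hv⟩ := u
  rcases v with i | j | c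
  · rcases eq_or_ne (i : ℕ) 1 with h1 | h1
    · calc (G k hk).edist (A hk i) (B0 hk) ≤ (G k hk).edist (A hk i) (A hk ⟨0, by omega⟩)
            + (G k hk).edist (A hk ⟨0, by omega⟩) (B0 hk) := SimpleGraph.edist_triangle
      _ ≤ 1 + 1 := by
          gcongr
          · exact eq_or_adj_step hk (Or.inr (adjAA hk (by intro h; rw [h] at h1; simp at h1)))
          · exact eq_or_adj_step hk (Or.inr (adjAB hk _ (by simp [B0])))
      _ ≤ 2 := by norm_num
    · have hik : (i : ℕ) < k + 1 := by omega
      calc (G k hk).edist (A hk i) (B0 hk) ≤ (G k hk).edist (A hk i) (B hk ⟨i, hik⟩ h1)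
            + (G k hk).edist (B hk ⟨i, hik⟩ h1) (B0 hk) := SimpleGraph.edist_triangle
      _ ≤ 1 + 1 := by
          gcongr
          · exact eq_or_adj_step hk (Or.inr (adjAB hk _ rfl))
          · exact eq_or_adj_step hk (eqOrAdjBB hk _ _)
      _ ≤ 2 := by norm_num
  · have hj : (j : ℕ) ≠ 1 := by
      intro h; apply hv; simp only [Sum.inr.injEq, Sum.inl.injEq]; exact Fin.ext h
    have : (⟨Sum.inr (Sum.inl j), hv⟩ : S k hk) = B hk j hj := rfl
    rw [this]
    calc (G k hk).edist (B hk j hj) (B0 hk) ≤ 1 := eq_or_adj_step hk (eqOrAdjBB hk _ _)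
    _ ≤ 2 := by norm_num
  · have : (⟨Sum.inr (Sum.inr c), hv⟩ : S k hk) = C hk c := rfl
    rw [this]
    calc (G k hk).edist (C hk c) (B0 hk) ≤ 1 := by
          rw [SimpleGraph.edist_comm]
          exact eq_or_adj_step hk (Or.inr (adjBC hk _ c))
    _ ≤ 2 := by norm_num

lemma edist_B0_to (u : S k hk) (hu : ∀ i : Fin k, u ≠ A hk i) :
    (G k hk).edist (B0 hk) u ≤ 1 := by
  obtain ⟨v, hv⟩ := u
  rcases v with i | j | c
  · exact absurd rfl (hu i)
  · have hj : (j : ℕ) ≠ 1 := by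
      intro h; apply hv; simp only [Sum.inr.injEq, Sum.inl.injEq]; exact Fin.ext h
    have : (⟨Sum.inr (Sum.inl j), hv⟩ : S k hk) = B hk j hj := rfl
    rw [this]
    exact eq_or_adj_step hk (eqOrAdjBB hk _ _)
  · have : (⟨Sum.inr (Sum.inr c), hv⟩ : S k hk) = C hk c := rfl
    rw [this]
    exact eq_or_adj_step hk (Or.inr (adjBC hk _ c))

lemma edist_le_three (u v : S k hk) : (G k hk).edist u v ≤ 3 := by
  by_cases ha : (∃ i : Fin k, u = A hk i) ∧ (∃ i : Fin k, v = A hk i)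
  · obtain ⟨⟨i, hi⟩, ⟨i', hi'⟩⟩ := ha
    subst hi hi'
    calc (G k hk).edist (A hk i) (A hk i') ≤ 1 := eq_or_adj_step hk (eqOrAdjAA hk i i')
    _ ≤ 3 := by norm_num
  · rw [not_and_or] at ha
    rcases ha with ha | ha
    · push_neg at ha
      calc (G k hk).edist u v ≤ (G k hk).edist u (B0 hk) + (G k hk).edist (B0 hk) v :=
            SimpleGraph.edist_triangle
      _ ≤ 1 + 2 := by
          gcongr
          · rw [SimpleGraph.edist_comm]; exact edist_B0_to hk u ha
          · rw [SimpleGraph.edist_comm]; exact edist_to_B0 hk v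
      _ ≤ 3 := by norm_num
    · push_neg at ha
      calc (G k hk).edist u v ≤ (G k hk).edist u (B0 hk) + (G k hk).edist (B0 hk) v :=
            SimpleGraph.edist_triangle
      _ ≤ 2 + 1 := by
          gcongr
          · exact edist_to_B0 hk u
          · exact edist_B0_to hk v ha
      _ ≤ 3 := by norm_num

def A1 : S k hk := A hk ⟨1, by omega⟩

lemma adj_A1 (w : S k hk) (h : (G k hk).Adj (A1 hk) w) : ∃ i : Fin k, w = A hk i := by
  obtain ⟨v, hv⟩ := w
  rcases v with i | j | c
  · exact ⟨i, rfl⟩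
  · exfalso
    have hj : (j : ℕ) ≠ 1 := by
      intro hh; apply hv; simp only [Sum.inr.injEq, Sum.inl.injEq]; exact Fin.ext hh
    simp [G, A1, A, sigmaRm, SimpleGraph.fromRel_adj] at h
    omega
  · simp [G, A1, A, C, sigmaRm, SimpleGraph.fromRel_adj] at h

lemma not_adj_A_C (i : Fin k) (c : Fin 2) : ¬ (G k hk).Adj (A hk i) (C hk c) := by
  simp [G, A, C, sigmaRm, SimpleGraph.fromRel_adj]

lemma walk_length_ge (p : (G k hk).Walk (A1 hk) (C hk ⟨0, by omega⟩)) : 3 ≤ p.length := by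
  cases p with
  | cons h q =>
    obtain ⟨i, hi⟩ := adj_A1 hk _ h
    subst hi
    cases q with
    | cons h2 q2 =>
      cases q2 with
      | nil => exact absurd h2 (not_adj_A_C hk i _)
      | cons h3 q3 => simp [SimpleGraph.Walk.length_cons]

lemma three_le_edist : 3 ≤ (G k hk).edist (A1 hk) (C hk ⟨0, by omega⟩) := by
  rw [SimpleGraph.edist_eq_sInf]
  apply le_sInf
  rintro x ⟨p, rfl⟩
  show (3 : ℕ∞) ≤ (p.length : ℕ∞)
  exact_mod_cast walk_length_ge hk p

lemma ediam_eq : (G k hk).ediam = 3 := by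
  apply le_antisymm
  · exact SimpleGraph.ediam_le_of_edist_le (edist_le_three hk)
  · calc (3 : ℕ∞) ≤ (G k hk).edist (A1 hk) (C hk ⟨0, by omega⟩) := three_le_edist hk
    _ ≤ (G k hk).ediam := SimpleGraph.edist_le_ediam

end Stmt8Aux

/-- The subgraph of `Σ^{R·2}_{k,1}` obtained by deleting the vertex `b_2` has diameter
exactly three. -/
theorem stmt8 (k : ℕ) (hk : 3 ≤ k) :
    ((sigmaRm k 1 2).induce {v | v ≠ Sum.inr (Sum.inl ⟨1, by omega⟩)}).diam = 3 := by
  show (Stmt8Aux.G k hk).diam = 3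
  unfold SimpleGraph.diam
  rw [Stmt8Aux.ediam_eq hk]
  rfl
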